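/- Define a_{n,k,1} to be the negative of the coefficient of x^{n-1} in the polynomial K_{n,k} of the polynomial Kreweras triangle. Then for all n ≥ 1 and 1 ≤ k ≤ n, a_{n,k,1} = C(n,2) + 2(k-1)(n-k), where C(n,2) is the binomial coefficient n choose 2. -/

import Mathlib

open Polynomial

lemma choose2_succ (m : ℕ) : ((m+1).choose 2 : ℤ) = (m.choose 2 : ℤ) + m := by
  show (((m+1).choose (1+1) : ℕ) : ℤ) = _
  rw [Nat.choose_succ_succ]
  push_cast [Nat.choose_one_right]
  ring

lemma choose2_add2 (m : ℕ) : ((m+2).choose 2 : ℤ) = (m.choose 2 : ℤ) + 2*m + 1 := by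
  rw [show m+2 = (m+1)+1 from rfl, choose2_succ (m+1), choose2_succ m]; push_cast; ring

theorem polyKreweras_subleading_coeff (K : ℕ → ℕ → Polynomial ℤ)
    (hK01 : K 0 1 = 1)
    (hK11 : K 1 1 = X)
    (hKrec1 : ∀ n, 2 ≤ n → K n 1 = (X - 1) * K (n - 1) 1 - ∑ i ∈ Finset.Icc 2 (n - 1), K (n - 1) i)
    (hKrec2 : ∀ n, 2 ≤ n → K n 2 = 2 * K n 1 + K (n - 1) 1 - X ^ 2 * K (n - 2) 1)
    (hKreck : ∀ n k, 3 ≤ k → k ≤ n →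
      K n k = 2 * K n (k - 1) - K n (k - 2) + K (n - 1) (k - 1) + K (n - 1) (k - 2)
        + 2 * X * K (n - 2) (k - 2)) :
    ∀ n k, 1 ≤ k → k ≤ n →
      -(K n k).coeff (n - 1) = (n.choose 2 : ℤ) + 2 * ((k : ℤ) - 1) * ((n : ℤ) - (k : ℤ)) := by
  suffices h : ∀ n k, 1 ≤ k → k ≤ n →
      (∀ j, n < j → (K n k).coeff j = 0) ∧ (K n k).coeff n = 1 ∧
      (K n k).coeff (n - 1) = -((n.choose 2 : ℤ) + 2 * ((k : ℤ) - 1) * ((n : ℤ) - (k : ℤ))) by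
    intro n k h1 h2
    rw [(h n k h1 h2).2.2]; ring
  intro n
  induction n using Nat.strong_induction_on with
  | _ n IH =>
  intro k
  induction k using Nat.strong_induction_on with
  | _ k IHk =>
  intro hk1 hkn
  rcases Nat.lt_or_ge k 2 with hk2 | hk2
  · -- k = 1
    obtain rfl : k = 1 := by omega
    rcases eq_or_lt_of_le hkn with hn1 | hn2
    · -- n = 1
      subst hn1
      rw [hK11]
      refine ⟨fun j hj => ?_, ?_, ?_⟩
      · rw [coeff_X]; simp; omega
      · simp
      · norm_num
    · -- n ≥ 2
      obtain ⟨m, rfl⟩ : ∃ m, n = m + 1 := ⟨n - 1, by omega⟩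
      have hm : 1 ≤ m := by omega
      have hrec := hKrec1 (m+1) (by omega)
      simp only [Nat.add_sub_cancel] at hrec
      obtain ⟨hz, htop, hsub⟩ := IH m (by omega) 1 le_rfl hm
      have hzi : ∀ i ∈ Finset.Icc 2 m, ∀ j, m < j → (K m i).coeff j = 0 := by
        intro i hi
        rw [Finset.mem_Icc] at hi
        exact (IH m (by omega) i (by omega) hi.2).1
      have htopi : ∀ i ∈ Finset.Icc 2 m, (K m i).coeff m = 1 := by
        intro i hi
        rw [Finset.mem_Icc] at hi
        exact (IH m (by omega) i (by omega) hi.2).2.1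
      refine ⟨fun j hj => ?_, ?_, ?_⟩
      · obtain ⟨t, rfl⟩ : ∃ t, j = t + 1 := ⟨j - 1, by omega⟩
        rw [hrec]
        simp only [coeff_sub, sub_mul, one_mul, finset_sum_coeff, coeff_X_mul]
        rw [hz t (by omega), hz (t+1) (by omega),
          Finset.sum_eq_zero (fun i hi => hzi i hi (t+1) (by omega))]
        ring
      · rw [hrec]
        simp only [coeff_sub, sub_mul, one_mul, finset_sum_coeff, coeff_X_mul]
        rw [htop, hz (m+1) (by omega),
          Finset.sum_eq_zero (fun i hi => hzi i hi (m+1) (by omega))]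
        ring
      · simp only [Nat.add_sub_cancel]
        obtain ⟨t, rfl⟩ : ∃ t, m = t + 1 := ⟨m - 1, by omega⟩
        rw [hrec]
        simp only [coeff_sub, sub_mul, one_mul, finset_sum_coeff, coeff_X_mul]
        simp only [Nat.add_sub_cancel] at hsub
        rw [hsub, htop, Finset.sum_congr rfl htopi, Finset.sum_const, Nat.card_Icc]
        rw [choose2_succ (t+1)]
        push_cast [Nat.cast_sub (by omega : 2 ≤ t + 1 + 1)]
        ring
  · rcases Nat.lt_or_ge k 3 with hk3 | hk3
    · -- k = 2
      obtain rfl : k = 2 := by omega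
      obtain ⟨m, rfl⟩ : ∃ m, n = m + 2 := ⟨n - 2, by omega⟩
      have hrec := hKrec2 (m+2) (by omega)
      simp only [show m+2-1 = m+1 from rfl, show m+2-2 = m from rfl] at hrec
      rw [two_mul] at hrec
      obtain ⟨hAz, hAtop, hAsub⟩ := IHk 1 (by omega) le_rfl (by omega)
      obtain ⟨hBz, hBtop, hBsub⟩ := IH (m+1) (by omega) 1 le_rfl (by omega)
      simp only [show m+2-1 = m+1 from rfl, Nat.add_sub_cancel] at hAsub hBsub
      have hqz : ∀ j, m < j → (K m 1).coeff j = 0 := by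
        rcases Nat.eq_zero_or_pos m with rfl | hm
        · intro j hj; rw [hK01, coeff_one, if_neg (by omega)]
        · exact (IH m (by omega) 1 le_rfl hm).1
      have hqtop : (K m 1).coeff m = 1 := by
        rcases Nat.eq_zero_or_pos m with rfl | hm
        · rw [hK01]; simp
        · exact (IH m (by omega) 1 le_rfl hm).2.1
      refine ⟨fun j hj => ?_, ?_, ?_⟩
      · obtain ⟨t, rfl⟩ : ∃ t, j = t + 2 := ⟨j - 2, by omega⟩
        rw [hrec]
        simp only [coeff_add, coeff_sub]
        rw [coeff_X_pow_mul (K m 1) 2 t, hAz (t+2) (by omega), hBz (t+2) (by omega),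
          hqz t (by omega)]
        ring
      · rw [hrec]
        simp only [coeff_add, coeff_sub]
        rw [coeff_X_pow_mul (K m 1) 2 m, hAtop, hBz (m+2) (by omega), hqtop]
        ring
      · simp only [show m+2-1 = m+1 from rfl]
        rcases Nat.eq_zero_or_pos m with rfl | hm
        · -- n = 2
          rw [hrec]
          simp only [coeff_add, coeff_sub]
          rw [hAsub, hBtop, hK01, mul_one, coeff_X_pow, if_neg (by omega)]
          norm_num
        · obtain ⟨t, rfl⟩ : ∃ t, m = t + 1 := ⟨m - 1, by omega⟩
          have hqsub := (IH (t+1) (by omega) 1 le_rfl (by omega)).2.2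
          simp only [Nat.add_sub_cancel] at hqsub
          rw [hrec]
          simp only [coeff_add, coeff_sub]
          have hX : (X^2 * K (t+1) 1).coeff (t+1+1) = (K (t+1) 1).coeff t :=
            coeff_X_pow_mul (K (t+1) 1) 2 t
          rw [hX, hAsub, hBtop, hqsub, choose2_add2 (t+1)]
          push_cast
          ring
    · -- k ≥ 3
      obtain ⟨l, rfl⟩ : ∃ l, k = l + 3 := ⟨k - 3, by omega⟩
      obtain ⟨m, rfl⟩ : ∃ m, n = m + 3 := ⟨n - 3, by omega⟩
      have hlm : l ≤ m := by omega
      have hrec := hKreck (m+3) (l+3) (by omega) (by omega)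
      simp only [show m+3-1 = m+2 from rfl, show m+3-2 = m+1 from rfl,
        show l+3-1 = l+2 from rfl, show l+3-2 = l+1 from rfl] at hrec
      have hrec' : K (m+3) (l+3) = (K (m+3) (l+2) + K (m+3) (l+2)) - K (m+3) (l+1)
          + K (m+2) (l+2) + K (m+2) (l+1) + (X * K (m+1) (l+1) + X * K (m+1) (l+1)) := by
        rw [hrec]; ring
      obtain ⟨hAz, hAtop, hAsub⟩ := IHk (l+2) (by omega) (by omega) (by omega)
      obtain ⟨hBz, hBtop, hBsub⟩ := IHk (l+1) (by omega) (by omega) (by omega)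
      obtain ⟨hCz, hCtop, hCsub⟩ := IH (m+2) (by omega) (l+2) (by omega) (by omega)
      obtain ⟨hDz, hDtop, hDsub⟩ := IH (m+2) (by omega) (l+1) (by omega) (by omega)
      obtain ⟨hEz, hEtop, hEsub⟩ := IH (m+1) (by omega) (l+1) (by omega) (by omega)
      simp only [show m+3-1 = m+2 from rfl] at hAsub hBsub
      refine ⟨fun j hj => ?_, ?_, ?_⟩
      · obtain ⟨t, rfl⟩ : ∃ t, j = t + 1 := ⟨j - 1, by omega⟩
        rw [hrec']
        simp only [coeff_add, coeff_sub, coeff_X_mul]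
        rw [hAz (t+1) (by omega), hBz (t+1) (by omega), hCz (t+1) (by omega),
          hDz (t+1) (by omega), hEz t (by omega)]
        ring
      · rw [hrec']
        simp only [coeff_add, coeff_sub]
        rw [coeff_X_mul (K (m+1) (l+1)) (m+2), hAtop, hBtop, hCz (m+3) (by omega),
          hDz (m+3) (by omega), hEz (m+2) (by omega)]
        ring
      · simp only [show m+3-1 = m+2 from rfl]
        rw [hrec']
        simp only [coeff_add, coeff_sub]
        rw [coeff_X_mul (K (m+1) (l+1)) (m+1), hAsub, hBsub, hCtop, hDtop, hEtop]
        push_cast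
        ring
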